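/- For all θ, θ' ∈ Θ, the invariant measures satisfy σ_β(μ*_θ, μ*_{θ'}) ≤ L_P (1/(1 − α)) (1 + βK/(1 − γ)) |θ − θ'|. -/

import Mathlib

open MeasureTheory ProbabilityTheory ENNReal

noncomputable section

namespace PoissonPaper

variable {X : Type*} [MeasurableSpace X]

/-- The weighted sup-norm `‖φ‖_β = sup_x |φ(x)| / (1 + β V(x))`, valued in `ℝ≥0∞`. -/
def wnorm (β : ℝ) (V : X → ℝ) (φ : X → ℝ) : ℝ≥0∞ :=
  ⨆ x, ENNReal.ofReal (|φ x| / (1 + β * V x))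

open Classical in
/-- The metric `d_β(x,y) = 2 + βV(x) + βV(y)` for `x ≠ y`, `0` on the diagonal. -/
def dBeta (β : ℝ) (V : X → ℝ) (x y : X) : ℝ :=
  if x = y then 0 else 2 + β * V x + β * V y

/-- The oscillation seminorm `|||φ|||_β = sup_{x ≠ y} |φ(x) - φ(y)| / d_β(x,y)`,
valued in `ℝ≥0∞`.  (For `x = y` the quotient is `0/0 = 0`, so the diagonal does
not contribute.) -/
def osc (β : ℝ) (V : X → ℝ) (φ : X → ℝ) : ℝ≥0∞ :=
  ⨆ x, ⨆ y, ENNReal.ofReal (|φ x - φ y| / dBeta β V x y)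

/-- Action of a kernel on functions: `(P*φ)(x) = ∫ φ(y) P(x,dy)`. -/
def act (P : Kernel X X) (φ : X → ℝ) : X → ℝ := fun x => ∫ y, φ y ∂(P x)

/-- Drift inequality `(P*V)(x) ≤ γ V(x) + K`, with the integral taken in the
lower-integral sense (recall `V ≥ 0`). -/
def Drift (P : Kernel X X) (V : X → ℝ) (γ K : ℝ) : Prop :=
  ∀ x, ∫⁻ y, ENNReal.ofReal (V y) ∂(P x) ≤ ENNReal.ofReal (γ * V x + K)

instance bindIsFinite (μ : Measure X) [IsFiniteMeasure μ] (P : Kernel X X) [IsMarkovKernel P] :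
    IsFiniteMeasure (μ.bind P) := by
  constructor
  rw [Measure.bind_apply MeasurableSet.univ (Kernel.measurable P).aemeasurable]
  calc ∫⁻ x, (P x) Set.univ ∂μ = ∫⁻ _, 1 ∂μ := by simp
    _ = μ Set.univ := by simp
    _ < ⊤ := measure_lt_top μ _

/-- The total variation measure `|μ₁ - μ₂|` of the difference of two finite measures. -/
def tv (μ₁ μ₂ : Measure X) [IsFiniteMeasure μ₁] [IsFiniteMeasure μ₂] : Measure X :=
  (μ₁.toSignedMeasure - μ₂.toSignedMeasure).totalVariation

/-- `σ_β(μ₁, μ₂) = ∫ (1 + βV) d|μ₁ - μ₂|`. -/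
def sigmaB (β : ℝ) (V : X → ℝ) (μ₁ μ₂ : Measure X) [IsFiniteMeasure μ₁] [IsFiniteMeasure μ₂] :
    ℝ :=
  ∫ x, (1 + β * V x) ∂(tv μ₁ μ₂)

/-- `σ_β(η) = ∫ (1 + βV) d|η|` for a finite signed measure `η`. -/
def sigmaS (β : ℝ) (V : X → ℝ) (η : SignedMeasure X) : ℝ :=
  ∫ x, (1 + β * V x) ∂(η.totalVariation)

/-- `n`-fold iterate (power) of a kernel. -/
def kpow (P : Kernel X X) : ℕ → Kernel X X
  | 0 => Kernel.id
  | n + 1 => P ∘ₖ kpow P n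

instance kpowIsMarkov (P : Kernel X X) [IsMarkovKernel P] : ∀ n, IsMarkovKernel (kpow P n)
  | 0 => by rw [kpow]; infer_instance
  | n + 1 => by have := kpowIsMarkov P n; rw [kpow]; infer_instance

/-- Action of a (Markov) kernel on finite signed measures, via the Jordan decomposition. -/
def sbind (P : Kernel X X) [IsMarkovKernel P] (η : SignedMeasure X) : SignedMeasure X :=
  (η.toJordanDecomposition.posPart.bind P).toSignedMeasure -
    (η.toJordanDecomposition.negPart.bind P).toSignedMeasure


section Helpers

instance tvFinite (μ₁ μ₂ : Measure X) [IsFiniteMeasure μ₁] [IsFiniteMeasure μ₂] :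
    IsFiniteMeasure (tv μ₁ μ₂) := by
  unfold tv SignedMeasure.totalVariation
  infer_instance

lemma hahn (μ₁ μ₂ : Measure X) [IsFiniteMeasure μ₁] [IsFiniteMeasure μ₂] :
    ∃ i : Set X, MeasurableSet i ∧ ∀ A : Set X, MeasurableSet A →
      ((tv μ₁ μ₂ A).toReal
          = ((μ₁ (A ∩ i)).toReal - (μ₂ (A ∩ i)).toReal)
            + ((μ₂ (A ∩ iᶜ)).toReal - (μ₁ (A ∩ iᶜ)).toReal)
        ∧ (μ₂ (A ∩ i)).toReal ≤ (μ₁ (A ∩ i)).toReal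
        ∧ (μ₁ (A ∩ iᶜ)).toReal ≤ (μ₂ (A ∩ iᶜ)).toReal) := by
  set s : SignedMeasure X := μ₁.toSignedMeasure - μ₂.toSignedMeasure with hs_def
  obtain ⟨i, hi₁, hi₂, hi₃, hpos, hneg⟩ := s.toJordanDecomposition_spec
  have hsB : ∀ B : Set X, MeasurableSet B → s B = (μ₁ B).toReal - (μ₂ B).toReal := by
    intro B hB
    rw [hs_def, VectorMeasure.sub_apply, Measure.toSignedMeasure_apply_measurable hB,
      Measure.toSignedMeasure_apply_measurable hB]
    rfl
  refine ⟨i, hi₁, fun A hA => ?_⟩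
  have hposA := SignedMeasure.toMeasureOfZeroLE_apply s hi₂ hi₁ hA
  have hnegA := SignedMeasure.toMeasureOfLEZero_apply s hi₃ hi₁.compl hA
  have hp : 0 ≤ s (i ∩ A) :=
    s.nonneg_of_zero_le_restrict (s.zero_le_restrict_subset hi₁ Set.inter_subset_left hi₂)
  have hn : s (iᶜ ∩ A) ≤ 0 :=
    s.nonpos_of_restrict_le_zero (s.restrict_le_zero_subset hi₁.compl Set.inter_subset_left hi₃)
  have htv : tv μ₁ μ₂ A
      = s.toJordanDecomposition.posPart A + s.toJordanDecomposition.negPart A := rfl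
  have h1 : (s.toJordanDecomposition.posPart A).toReal = s (i ∩ A) := by
    rw [hpos, hposA]; simp
  have h2 : (s.toJordanDecomposition.negPart A).toReal = - s (iᶜ ∩ A) := by
    rw [hneg, hnegA]; simp
  have hfin1 : s.toJordanDecomposition.posPart A ≠ ⊤ := measure_ne_top _ _
  have hfin2 : s.toJordanDecomposition.negPart A ≠ ⊤ := measure_ne_top _ _
  have e1 : (tv μ₁ μ₂ A).toReal = s (i ∩ A) - s (iᶜ ∩ A) := by
    rw [htv, ENNReal.toReal_add hfin1 hfin2, h1, h2]; ring
  rw [Set.inter_comm i A] at e1 hp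
  rw [Set.inter_comm iᶜ A] at e1 hn
  rw [hsB _ (hA.inter hi₁)] at hp
  rw [hsB _ (hA.inter hi₁.compl)] at hn
  refine ⟨?_, by linarith, by linarith⟩
  rw [e1, hsB _ (hA.inter hi₁), hsB _ (hA.inter hi₁.compl)]
  ring

lemma tv_self (μ : Measure X) [IsFiniteMeasure μ] : tv μ μ = 0 := by
  unfold tv
  rw [sub_self, SignedMeasure.totalVariation_zero]

lemma measure_toReal_split (μ : Measure X) [IsFiniteMeasure μ] {A i : Set X}
    (hA : MeasurableSet A) (hi : MeasurableSet i) :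
    (μ A).toReal = (μ (A ∩ i)).toReal + (μ (A ∩ iᶜ)).toReal := by
  have h := measure_inter_add_diff (μ := μ) A hi
  have h2 : A \ i = A ∩ iᶜ := Set.diff_eq A i
  rw [h2] at h
  rw [← h, ENNReal.toReal_add (measure_ne_top _ _) (measure_ne_top _ _)]

lemma hahn_measure (μ₁ μ₂ : Measure X) [IsFiniteMeasure μ₁] [IsFiniteMeasure μ₂] :
    ∃ i : Set X, MeasurableSet i ∧
      tv μ₁ μ₂ + μ₂.restrict i + μ₁.restrict iᶜ = μ₁.restrict i + μ₂.restrict iᶜ := by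
  obtain ⟨i, hi, h⟩ := hahn μ₁ μ₂
  refine ⟨i, hi, Measure.ext fun A hA => ?_⟩
  obtain ⟨he, h1, h2⟩ := h A hA
  simp only [Measure.add_apply, Measure.restrict_apply hA]
  refine (ENNReal.toReal_eq_toReal_iff'
    (ENNReal.add_ne_top.2 ⟨ENNReal.add_ne_top.2 ⟨measure_ne_top _ _, measure_ne_top _ _⟩,
      measure_ne_top _ _⟩)
    (ENNReal.add_ne_top.2 ⟨measure_ne_top _ _, measure_ne_top _ _⟩)).1 ?_
  rw [ENNReal.toReal_add (ENNReal.add_ne_top.2 ⟨measure_ne_top _ _, measure_ne_top _ _⟩)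
      (measure_ne_top _ _),
    ENNReal.toReal_add (measure_ne_top _ _) (measure_ne_top _ _),
    ENNReal.toReal_add (measure_ne_top _ _) (measure_ne_top _ _)]
  linarith

lemma le_add_tv (μ₁ μ₂ : Measure X) [IsFiniteMeasure μ₁] [IsFiniteMeasure μ₂] :
    μ₁ ≤ μ₂ + tv μ₁ μ₂ := by
  obtain ⟨i, hi, h⟩ := hahn μ₁ μ₂
  rw [Measure.le_iff]
  intro A hA
  obtain ⟨he, h1, h2⟩ := h A hA
  refine (ENNReal.toReal_le_toReal (measure_ne_top _ _) (measure_ne_top _ _)).1 ?_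
  rw [Measure.add_apply, ENNReal.toReal_add (measure_ne_top _ _) (measure_ne_top _ _),
    measure_toReal_split μ₁ hA hi, measure_toReal_split μ₂ hA hi]
  linarith

lemma tv_le_add (μ₁ μ₂ : Measure X) [IsFiniteMeasure μ₁] [IsFiniteMeasure μ₂] :
    tv μ₁ μ₂ ≤ μ₁ + μ₂ := by
  obtain ⟨i, hi, h⟩ := hahn μ₁ μ₂
  rw [Measure.le_iff]
  intro A hA
  obtain ⟨he, h1, h2⟩ := h A hA
  refine (ENNReal.toReal_le_toReal (measure_ne_top _ _) (measure_ne_top _ _)).1 ?_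
  rw [Measure.add_apply, ENNReal.toReal_add (measure_ne_top _ _) (measure_ne_top _ _),
    measure_toReal_split μ₁ hA hi, measure_toReal_split μ₂ hA hi, he]
  have := ENNReal.toReal_nonneg (a := μ₂ (A ∩ i))
  have := ENNReal.toReal_nonneg (a := μ₁ (A ∩ iᶜ))
  linarith

lemma abs_le_tv (μ₁ μ₂ : Measure X) [IsFiniteMeasure μ₁] [IsFiniteMeasure μ₂]
    {A : Set X} (hA : MeasurableSet A) :
    |(μ₁ A).toReal - (μ₂ A).toReal| ≤ (tv μ₁ μ₂ A).toReal := by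
  obtain ⟨i, hi, h⟩ := hahn μ₁ μ₂
  obtain ⟨he, h1, h2⟩ := h A hA
  rw [measure_toReal_split μ₁ hA hi, measure_toReal_split μ₂ hA hi, he]
  rw [abs_le]
  constructor <;> linarith

lemma tv_triangle (μ₁ μ₂ μ₃ : Measure X)
    [IsFiniteMeasure μ₁] [IsFiniteMeasure μ₂] [IsFiniteMeasure μ₃] :
    tv μ₁ μ₃ ≤ tv μ₁ μ₂ + tv μ₂ μ₃ := by
  obtain ⟨i, hi, h⟩ := hahn μ₁ μ₃
  rw [Measure.le_iff]
  intro A hA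
  obtain ⟨he, h1, h2⟩ := h A hA
  refine (ENNReal.toReal_le_toReal (measure_ne_top _ _) (measure_ne_top _ _)).1 ?_
  rw [Measure.add_apply, ENNReal.toReal_add (measure_ne_top _ _) (measure_ne_top _ _), he]
  have t12i := abs_le_tv μ₁ μ₂ (hA.inter hi)
  have t23i := abs_le_tv μ₂ μ₃ (hA.inter hi)
  have t12c := abs_le_tv μ₁ μ₂ (hA.inter hi.compl)
  have t23c := abs_le_tv μ₂ μ₃ (hA.inter hi.compl)
  rw [measure_toReal_split (tv μ₁ μ₂) hA hi, measure_toReal_split (tv μ₂ μ₃) hA hi]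
  have a1 := abs_le.1 t12i
  have a2 := abs_le.1 t23i
  have a3 := abs_le.1 t12c
  have a4 := abs_le.1 t23c
  obtain ⟨b1, b1'⟩ := a1
  obtain ⟨b2, b2'⟩ := a2
  obtain ⟨b3, b3'⟩ := a3
  obtain ⟨b4, b4'⟩ := a4
  linarith

lemma tv_congr {μ₁ μ₂ ν₁ ν₂ : Measure X} [IsFiniteMeasure μ₁] [IsFiniteMeasure μ₂]
    [IsFiniteMeasure ν₁] [IsFiniteMeasure ν₂] (h1 : μ₁ = ν₁) (h2 : μ₂ = ν₂) :
    tv μ₁ μ₂ = tv ν₁ ν₂ := by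
  subst h1
  subst h2
  rfl

lemma sigma_eq {β : ℝ} (hβ : 0 ≤ β) {V : X → ℝ} (hVmeas : Measurable V) (hV0 : ∀ x, 0 ≤ V x)
    (μ₁ μ₂ : Measure X) [IsFiniteMeasure μ₁] [IsFiniteMeasure μ₂] :
    sigmaB β V μ₁ μ₂ = (∫⁻ x, ENNReal.ofReal (1 + β * V x) ∂(tv μ₁ μ₂)).toReal := by
  rw [sigmaB, integral_eq_lintegral_of_nonneg_ae]
  · exact Filter.Eventually.of_forall fun x => by
      simp only [Pi.zero_apply]
      nlinarith [hV0 x, mul_nonneg hβ (hV0 x)]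
  · exact (measurable_const.add (hVmeas.const_mul β)).aestronglyMeasurable

lemma sigma_nonneg {β : ℝ} (hβ : 0 ≤ β) {V : X → ℝ} (hVmeas : Measurable V)
    (hV0 : ∀ x, 0 ≤ V x) (μ₁ μ₂ : Measure X) [IsFiniteMeasure μ₁] [IsFiniteMeasure μ₂] :
    0 ≤ sigmaB β V μ₁ μ₂ := by
  rw [sigma_eq hβ hVmeas hV0]
  exact ENNReal.toReal_nonneg

lemma lint_affine_ne_top {V : X → ℝ} (hVmeas : Measurable V) {a b : ℝ}
    (μ : Measure X) [IsFiniteMeasure μ] (hb : 0 ≤ b) (hint : Integrable V μ) :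
    ∫⁻ x, ENNReal.ofReal (a + b * V x) ∂μ ≠ ⊤ := by
  have h1 : ∫⁻ x, ENNReal.ofReal (a + b * V x) ∂μ
      ≤ ∫⁻ x, (ENNReal.ofReal a + ENNReal.ofReal b * ENNReal.ofReal (V x)) ∂μ := by
    refine lintegral_mono fun x => ?_
    calc ENNReal.ofReal (a + b * V x)
        ≤ ENNReal.ofReal a + ENNReal.ofReal (b * V x) := ENNReal.ofReal_add_le
      _ = ENNReal.ofReal a + ENNReal.ofReal b * ENNReal.ofReal (V x) := by
          rw [ENNReal.ofReal_mul hb]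
  refine ne_top_of_le_ne_top ?_ h1
  rw [lintegral_add_left measurable_const, lintegral_const,
    lintegral_const_mul _ hVmeas.ennreal_ofReal]
  refine ENNReal.add_ne_top.2 ⟨?_, ?_⟩
  · exact ENNReal.mul_ne_top ENNReal.ofReal_ne_top (measure_ne_top _ _)
  · exact ENNReal.mul_ne_top ENNReal.ofReal_ne_top hint.lintegral_lt_top.ne

lemma lintF_ne_top {β : ℝ} {V : X → ℝ} (hVmeas : Measurable V) (hβ : 0 ≤ β)
    (μ : Measure X) [IsFiniteMeasure μ] (hint : Integrable V μ) :
    ∫⁻ x, ENNReal.ofReal (1 + β * V x) ∂μ ≠ ⊤ :=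
  lint_affine_ne_top hVmeas μ hβ hint

lemma lintF_tv_ne_top {β : ℝ} {V : X → ℝ} (hVmeas : Measurable V) (hβ : 0 ≤ β)
    (μ₁ μ₂ : Measure X) [IsFiniteMeasure μ₁] [IsFiniteMeasure μ₂]
    (hint₁ : Integrable V μ₁) (hint₂ : Integrable V μ₂) :
    ∫⁻ x, ENNReal.ofReal (1 + β * V x) ∂(tv μ₁ μ₂) ≠ ⊤ := by
  have h : ∫⁻ x, ENNReal.ofReal (1 + β * V x) ∂(tv μ₁ μ₂)
      ≤ ∫⁻ x, ENNReal.ofReal (1 + β * V x) ∂μ₁ + ∫⁻ x, ENNReal.ofReal (1 + β * V x) ∂μ₂ := by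
    rw [← lintegral_add_measure]
    exact lintegral_mono' (tv_le_add μ₁ μ₂) le_rfl
  exact ne_top_of_le_ne_top
    (ENNReal.add_ne_top.2 ⟨lintF_ne_top hVmeas hβ μ₁ hint₁, lintF_ne_top hVmeas hβ μ₂ hint₂⟩) h

lemma lintF_kernel_le {β : ℝ} {V : X → ℝ} (hVmeas : Measurable V) (hV0 : ∀ x, 0 ≤ V x)
    (hβ : 0 ≤ β) {γ K : ℝ} (hγ0 : 0 ≤ γ) (hK : 0 ≤ K) (P : Kernel X X) [IsMarkovKernel P]
    (hdrift : Drift P V γ K) (x : X) :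
    ∫⁻ y, ENNReal.ofReal (1 + β * V y) ∂(P x) ≤ ENNReal.ofReal (1 + β * (γ * V x + K)) := by
  have h1 : ∫⁻ y, ENNReal.ofReal (1 + β * V y) ∂(P x)
      ≤ ∫⁻ y, (1 + ENNReal.ofReal β * ENNReal.ofReal (V y)) ∂(P x) := by
    refine lintegral_mono fun y => ?_
    calc ENNReal.ofReal (1 + β * V y)
        ≤ ENNReal.ofReal 1 + ENNReal.ofReal (β * V y) := ENNReal.ofReal_add_le
      _ = 1 + ENNReal.ofReal β * ENNReal.ofReal (V y) := by
          rw [ENNReal.ofReal_one, ENNReal.ofReal_mul hβ]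
  refine h1.trans ?_
  rw [lintegral_add_left measurable_const,
    lintegral_const_mul _ hVmeas.ennreal_ofReal]
  have h2 : ENNReal.ofReal β * ∫⁻ y, ENNReal.ofReal (V y) ∂(P x)
      ≤ ENNReal.ofReal β * ENNReal.ofReal (γ * V x + K) :=
    mul_le_mul_right (hdrift x) _
  have h3 : (∫⁻ _, (1 : ℝ≥0∞) ∂(P x)) = 1 := by simp
  rw [h3]
  calc (1 : ℝ≥0∞) + ENNReal.ofReal β * ∫⁻ y, ENNReal.ofReal (V y) ∂(P x)
      ≤ 1 + ENNReal.ofReal β * ENNReal.ofReal (γ * V x + K) := add_le_add_right h2 1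
    _ = ENNReal.ofReal (1 + β * (γ * V x + K)) := by
        rw [← ENNReal.ofReal_mul hβ, ← ENNReal.ofReal_one,
          ← ENNReal.ofReal_add (by norm_num)
            (mul_nonneg hβ (add_nonneg (mul_nonneg hγ0 (hV0 x)) hK))]

lemma lintF_bind_ne_top {β : ℝ} {V : X → ℝ} (hVmeas : Measurable V) (hV0 : ∀ x, 0 ≤ V x)
    (hβ : 0 ≤ β) {γ K : ℝ} (hγ0 : 0 ≤ γ) (hK : 0 ≤ K) (P : Kernel X X) [IsMarkovKernel P]
    (hdrift : Drift P V γ K) (μ : Measure X) [IsFiniteMeasure μ] (hint : Integrable V μ) :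
    ∫⁻ x, ENNReal.ofReal (1 + β * V x) ∂(μ.bind P) ≠ ⊤ := by
  rw [Measure.lintegral_bind (f := fun x => ENNReal.ofReal (1 + β * V x)) P.measurable.aemeasurable
    (measurable_const.add (hVmeas.const_mul β)).ennreal_ofReal.aemeasurable]
  refine ne_top_of_le_ne_top ?_ (lintegral_mono fun x =>
    lintF_kernel_le hVmeas hV0 hβ hγ0 hK P hdrift x)
  have hcongr : ∀ x : X, ENNReal.ofReal (1 + β * (γ * V x + K))
      = ENNReal.ofReal ((1 + β * K) + (β * γ) * V x) := by
    intro x; congr 1; ring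
  simp only [hcongr]
  exact lint_affine_ne_top hVmeas μ (by positivity) hint

lemma key_bind (μ : Measure X) [IsFiniteMeasure μ] (P P' : Kernel X X)
    [IsMarkovKernel P] [IsMarkovKernel P'] {F G : X → ℝ≥0∞}
    (hF : Measurable F) (hG : Measurable G)
    (hfin : ∫⁻ y, F y ∂(μ.bind P) ≠ ⊤) (hfin' : ∫⁻ y, F y ∂(μ.bind P') ≠ ⊤)
    (hpt : ∀ x, ∫⁻ y, F y ∂(tv (P x) (P' x)) ≤ G x) :
    ∫⁻ y, F y ∂(tv (μ.bind P) (μ.bind P')) ≤ ∫⁻ x, G x ∂μ := by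
  obtain ⟨i, hi, hid⟩ := hahn_measure (μ.bind P) (μ.bind P')
  have hresP : ∀ (Q : Kernel X X) [IsMarkovKernel Q] (j : Set X) (hj : MeasurableSet j),
      ∫⁻ y, F y ∂((μ.bind Q).restrict j)
        = ∫⁻ x, (∫⁻ y, j.indicator F y ∂(Q x)) ∂μ := by
    intro Q _ j hj
    rw [← lintegral_indicator hj, Measure.lintegral_bind Q.measurable.aemeasurable (hF.indicator hj).aemeasurable]
  have hmeas_int : ∀ (Q : Kernel X X) [IsMarkovKernel Q] (j : Set X) (hj : MeasurableSet j),
      Measurable fun x => ∫⁻ y, j.indicator F y ∂(Q x) := by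
    intro Q _ j hj
    exact (Measure.measurable_lintegral (hF.indicator hj)).comp Q.measurable
  have Hlint := congrArg (fun m : Measure X => ∫⁻ y, F y ∂m) hid
  simp only [lintegral_add_measure] at Hlint
  rw [hresP P i hi, hresP P' i hi, hresP P iᶜ hi.compl, hresP P' iᶜ hi.compl] at Hlint
  set a : X → ℝ≥0∞ := fun x => ∫⁻ y, i.indicator F y ∂(P x) with ha_def
  set a' : X → ℝ≥0∞ := fun x => ∫⁻ y, i.indicator F y ∂(P' x) with ha'_def
  set b : X → ℝ≥0∞ := fun x => ∫⁻ y, iᶜ.indicator F y ∂(P x) with hb_def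
  set b' : X → ℝ≥0∞ := fun x => ∫⁻ y, iᶜ.indicator F y ∂(P' x) with hb'_def
  have hameas : Measurable a := hmeas_int P i hi
  have ha'meas : Measurable a' := hmeas_int P' i hi
  have hbmeas : Measurable b := hmeas_int P iᶜ hi.compl
  -- pointwise inequality
  have hpoint : ∀ x, a x + b' x ≤ a' x + b x + G x := by
    intro x
    have h1 : a x ≤ a' x + ∫⁻ y, i.indicator F y ∂(tv (P x) (P' x)) := by
      calc a x ≤ ∫⁻ y, i.indicator F y ∂((P' x) + tv (P x) (P' x)) :=
            lintegral_mono' (le_add_tv (P x) (P' x)) le_rfl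
        _ = _ := lintegral_add_measure _ _ _
    have h2 : b' x ≤ b x + ∫⁻ y, iᶜ.indicator F y ∂(tv (P' x) (P x)) := by
      calc b' x ≤ ∫⁻ y, iᶜ.indicator F y ∂((P x) + tv (P' x) (P x)) :=
            lintegral_mono' (le_add_tv (P' x) (P x)) le_rfl
        _ = _ := lintegral_add_measure _ _ _
    have htvsymm : tv (P' x) (P x) = tv (P x) (P' x) := by
      unfold tv
      rw [← SignedMeasure.totalVariation_neg]
      congr 1
      abel
    rw [htvsymm] at h2
    have h3 : (∫⁻ y, i.indicator F y ∂(tv (P x) (P' x)))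
        + ∫⁻ y, iᶜ.indicator F y ∂(tv (P x) (P' x)) ≤ G x := by
      rw [lintegral_indicator hi, lintegral_indicator hi.compl, lintegral_add_compl F hi]
      exact hpt x
    calc a x + b' x
        ≤ (a' x + ∫⁻ y, i.indicator F y ∂(tv (P x) (P' x)))
          + (b x + ∫⁻ y, iᶜ.indicator F y ∂(tv (P x) (P' x))) := add_le_add h1 h2
      _ = a' x + b x + ((∫⁻ y, i.indicator F y ∂(tv (P x) (P' x)))
          + ∫⁻ y, iᶜ.indicator F y ∂(tv (P x) (P' x))) := by ring
      _ ≤ a' x + b x + G x := add_le_add_right h3 _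
  have hsum : (∫⁻ x, a x ∂μ) + ∫⁻ x, b' x ∂μ
      ≤ ((∫⁻ x, a' x ∂μ) + ∫⁻ x, b x ∂μ) + ∫⁻ x, G x ∂μ := by
    have e1 : ∫⁻ x, (a x + b' x) ∂μ = (∫⁻ x, a x ∂μ) + ∫⁻ x, b' x ∂μ :=
      lintegral_add_left hameas _
    have e2 : ∫⁻ x, (a' x + b x + G x) ∂μ
        = ((∫⁻ x, a' x ∂μ) + ∫⁻ x, b x ∂μ) + ∫⁻ x, G x ∂μ := by
      rw [lintegral_add_left (f := fun x => a' x + b x) (ha'meas.add hbmeas),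
        lintegral_add_left ha'meas]
    rw [← e1, ← e2]
    exact lintegral_mono hpoint
  -- finiteness of the cancelled part
  have hC : (∫⁻ x, a' x ∂μ) + ∫⁻ x, b x ∂μ ≠ ⊤ := by
    have ea : ∫⁻ x, a' x ∂μ = ∫⁻ y, F y ∂((μ.bind P').restrict i) := (hresP P' i hi).symm
    have eb : ∫⁻ x, b x ∂μ = ∫⁻ y, F y ∂((μ.bind P).restrict iᶜ) :=
      (hresP P iᶜ hi.compl).symm
    rw [ea, eb]
    refine ENNReal.add_ne_top.2 ⟨ne_top_of_le_ne_top hfin' ?_, ne_top_of_le_ne_top hfin ?_⟩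
    · exact lintegral_mono' Measure.restrict_le_self le_rfl
    · exact lintegral_mono' Measure.restrict_le_self le_rfl
  have hmain : (∫⁻ y, F y ∂(tv (μ.bind P) (μ.bind P')))
      + ((∫⁻ x, a' x ∂μ) + ∫⁻ x, b x ∂μ)
      ≤ (∫⁻ x, G x ∂μ) + ((∫⁻ x, a' x ∂μ) + ∫⁻ x, b x ∂μ) := by
    calc (∫⁻ y, F y ∂(tv (μ.bind P) (μ.bind P'))) + ((∫⁻ x, a' x ∂μ) + ∫⁻ x, b x ∂μ)
        = (∫⁻ x, a x ∂μ) + ∫⁻ x, b' x ∂μ := by rw [← Hlint]; ring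
      _ ≤ ((∫⁻ x, a' x ∂μ) + ∫⁻ x, b x ∂μ) + ∫⁻ x, G x ∂μ := hsum
      _ = (∫⁻ x, G x ∂μ) + ((∫⁻ x, a' x ∂μ) + ∫⁻ x, b x ∂μ) := by ring
  exact (ENNReal.add_le_add_iff_right hC).1 hmain

lemma moment {V : X → ℝ} (hVmeas : Measurable V) {γ K : ℝ} (hγ0 : 0 ≤ γ) (hγ1 : γ < 1)
    (hK : 0 ≤ K) (P : Kernel X X) [IsMarkovKernel P] (hdrift : Drift P V γ K)
    (μ : Measure X) [IsProbabilityMeasure μ] (hint : Integrable V μ)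
    (hinv : μ.bind P = μ) :
    ∫⁻ x, ENNReal.ofReal (V x) ∂μ ≤ ENNReal.ofReal (K / (1 - γ)) := by
  set m : ℝ≥0∞ := ∫⁻ x, ENNReal.ofReal (V x) ∂μ with hm_def
  have hm : m ≠ ⊤ := hint.lintegral_lt_top.ne
  have step : m ≤ ENNReal.ofReal γ * m + ENNReal.ofReal K := by
    conv_lhs => rw [hm_def, ← hinv]
    rw [Measure.lintegral_bind P.measurable.aemeasurable hVmeas.ennreal_ofReal.aemeasurable]
    calc ∫⁻ x, (∫⁻ y, ENNReal.ofReal (V y) ∂(P x)) ∂μ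
        ≤ ∫⁻ x, ENNReal.ofReal (γ * V x + K) ∂μ := lintegral_mono fun x => hdrift x
      _ ≤ ∫⁻ x, (ENNReal.ofReal γ * ENNReal.ofReal (V x) + ENNReal.ofReal K) ∂μ := by
          refine lintegral_mono fun x => ?_
          calc ENNReal.ofReal (γ * V x + K)
              ≤ ENNReal.ofReal (γ * V x) + ENNReal.ofReal K := ENNReal.ofReal_add_le
            _ = ENNReal.ofReal γ * ENNReal.ofReal (V x) + ENNReal.ofReal K := by
                rw [ENNReal.ofReal_mul hγ0]
      _ = ENNReal.ofReal γ * m + ENNReal.ofReal K := by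
          rw [lintegral_add_right _ measurable_const, lintegral_const,
            lintegral_const_mul _ hVmeas.ennreal_ofReal]
          simp
          rfl
  have hRfin : ENNReal.ofReal γ * m + ENNReal.ofReal K ≠ ⊤ :=
    ENNReal.add_ne_top.2 ⟨ENNReal.mul_ne_top ENNReal.ofReal_ne_top hm, ENNReal.ofReal_ne_top⟩
  have treal : m.toReal ≤ γ * m.toReal + K := by
    have := ENNReal.toReal_mono hRfin step
    rwa [ENNReal.toReal_add (ENNReal.mul_ne_top ENNReal.ofReal_ne_top hm) ENNReal.ofReal_ne_top,
      ENNReal.toReal_mul, ENNReal.toReal_ofReal hγ0, ENNReal.toReal_ofReal hK] at this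
  have hfinal : m.toReal ≤ K / (1 - γ) := by
    rw [le_div_iff₀ (by linarith)]
    nlinarith [ENNReal.toReal_nonneg (a := m)]
  calc m = ENNReal.ofReal m.toReal := (ENNReal.ofReal_toReal hm).symm
    _ ≤ ENNReal.ofReal (K / (1 - γ)) := ENNReal.ofReal_le_ofReal hfinal

end Helpers

/-- Lipschitz continuity in the parameter of the invariant measures. -/
theorem invariant_measures_lipschitz
    {X : Type*} [MeasurableSpace X] {k : ℕ} {Θ : Set (EuclideanSpace ℝ (Fin k))}
    (hΘ : Θ.Nonempty) (P : Θ → Kernel X X) [∀ θ, IsMarkovKernel (P θ)]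
    (V : X → ℝ) (hVmeas : Measurable V) (hV0 : ∀ x, 0 ≤ V x)
    (β : ℝ) (hβ : 0 < β)
    (γ K : ℝ) (hγ : γ ∈ Set.Ioo (0:ℝ) 1) (hK : 0 ≤ K) (hdrift : ∀ θ, Drift (P θ) V γ K)
    (L_P : ℝ)
    (hlip : ∀ θ θ' : Θ, ∀ x,
      sigmaB β V ((P θ) x) ((P θ') x) ≤ L_P * ‖θ.1 - θ'.1‖ * (1 + β * V x))
    (α : ℝ) (hα : α ∈ Set.Ioo γ 1)
    (hsig : ∀ θ, ∀ (μ₁ μ₂ : Measure X) [IsProbabilityMeasure μ₁] [IsProbabilityMeasure μ₂],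
      Integrable V μ₁ → Integrable V μ₂ →
      sigmaB β V (μ₁.bind (P θ)) (μ₂.bind (P θ)) ≤ α * sigmaB β V μ₁ μ₂)
    (μst : Θ → Measure X) [∀ θ, IsProbabilityMeasure (μst θ)]
    (hμint : ∀ θ, Integrable V (μst θ)) (hμinv : ∀ θ, (μst θ).bind (P θ) = μst θ) :
    ∀ θ θ' : Θ, sigmaB β V (μst θ) (μst θ') ≤
      L_P * (1 / (1 - α)) * (1 + β * (K / (1 - γ))) * ‖θ.1 - θ'.1‖ := by
  intro θ θ'
  by_cases hθθ : θ = θ'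
  · subst hθθ
    have h0 : sigmaB β V (μst θ) (μst θ) = 0 := by
      rw [sigmaB, tv_self, integral_zero_measure]
    rw [h0, sub_self, norm_zero, mul_zero]
  · have hβ' : (0:ℝ) ≤ β := hβ.le
    obtain ⟨hγ0, hγ1⟩ := hγ
    obtain ⟨hαγ, hα1⟩ := hα
    have hα0 : (0:ℝ) ≤ α := le_trans hγ0.le hαγ.le
    have h1α : (0:ℝ) < 1 - α := by linarith
    have hKg : 0 ≤ K / (1 - γ) := div_nonneg hK (by linarith)
    have hXne : Nonempty X := by
      by_contra h
      rw [not_nonempty_iff] at h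
      have h1 : (μst θ) Set.univ = 1 := measure_univ
      rw [Set.univ_eq_empty_iff.mpr h] at h1
      simp at h1
    obtain ⟨x₀⟩ := hXne
    have hc : 0 ≤ L_P * ‖θ.1 - θ'.1‖ := by
      have h1 := hlip θ θ' x₀
      have h2 := sigma_nonneg hβ' hVmeas hV0 ((P θ) x₀) ((P θ') x₀)
      have ht : 0 < 1 + β * V x₀ := by nlinarith [hV0 x₀]
      by_contra hlt
      push_neg at hlt
      nlinarith
    set c := L_P * ‖θ.1 - θ'.1‖ with hc_def
    have hFmeas : Measurable fun x => ENNReal.ofReal (1 + β * V x) :=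
      (measurable_const.add (hVmeas.const_mul β)).ennreal_ofReal
    have hGmeas : Measurable fun x => ENNReal.ofReal (c * (1 + β * V x)) :=
      ((measurable_const.add (hVmeas.const_mul β)).const_mul c).ennreal_ofReal
    have hLfin : ∫⁻ x, ENNReal.ofReal (1 + β * V x) ∂(tv (μst θ) (μst θ')) ≠ ⊤ :=
      lintF_tv_ne_top hVmeas hβ' _ _ (hμint θ) (hμint θ')
    have hσL : sigmaB β V (μst θ) (μst θ')
        = (∫⁻ x, ENNReal.ofReal (1 + β * V x) ∂(tv (μst θ) (μst θ'))).toReal :=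
      sigma_eq hβ' hVmeas hV0 _ _
    have hfin1 : ∫⁻ x, ENNReal.ofReal (1 + β * V x) ∂((μst θ).bind (P θ)) ≠ ⊤ :=
      lintF_bind_ne_top hVmeas hV0 hβ' hγ0.le hK (P θ) (hdrift θ) _ (hμint θ)
    have hfin2 : ∫⁻ x, ENNReal.ofReal (1 + β * V x) ∂((μst θ).bind (P θ')) ≠ ⊤ :=
      lintF_bind_ne_top hVmeas hV0 hβ' hγ0.le hK (P θ') (hdrift θ') _ (hμint θ)
    have hfin3 : ∫⁻ x, ENNReal.ofReal (1 + β * V x) ∂((μst θ').bind (P θ')) ≠ ⊤ :=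
      lintF_bind_ne_top hVmeas hV0 hβ' hγ0.le hK (P θ') (hdrift θ') _ (hμint θ')
    -- triangle inequality after using invariance
    have hLrw : tv (μst θ) (μst θ')
        = tv ((μst θ).bind (P θ)) ((μst θ').bind (P θ')) :=
      (tv_congr (hμinv θ) (hμinv θ')).symm
    have htri : ∫⁻ x, ENNReal.ofReal (1 + β * V x) ∂(tv (μst θ) (μst θ'))
        ≤ (∫⁻ x, ENNReal.ofReal (1 + β * V x)
              ∂(tv ((μst θ).bind (P θ)) ((μst θ).bind (P θ'))))
          + ∫⁻ x, ENNReal.ofReal (1 + β * V x)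
              ∂(tv ((μst θ).bind (P θ')) ((μst θ').bind (P θ'))) := by
      rw [hLrw, ← lintegral_add_measure]
      exact lintegral_mono' (tv_triangle _ _ _) le_rfl
    -- first term: the kernel-Lipschitz bound
    have hT1 : ∫⁻ x, ENNReal.ofReal (1 + β * V x)
          ∂(tv ((μst θ).bind (P θ)) ((μst θ).bind (P θ')))
        ≤ ∫⁻ x, ENNReal.ofReal (c * (1 + β * V x)) ∂(μst θ) := by
      refine key_bind (μst θ) (P θ) (P θ') hFmeas hGmeas hfin1 hfin2 fun x => ?_
      have hb1 := lintF_kernel_le hVmeas hV0 hβ' hγ0.le hK (P θ) (hdrift θ) x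
      have hb2 := lintF_kernel_le hVmeas hV0 hβ' hγ0.le hK (P θ') (hdrift θ') x
      have hfx : ∫⁻ y, ENNReal.ofReal (1 + β * V y) ∂(tv ((P θ) x) ((P θ') x)) ≠ ⊤ := by
        have hle : ∫⁻ y, ENNReal.ofReal (1 + β * V y) ∂(tv ((P θ) x) ((P θ') x))
            ≤ (∫⁻ y, ENNReal.ofReal (1 + β * V y) ∂((P θ) x))
              + ∫⁻ y, ENNReal.ofReal (1 + β * V y) ∂((P θ') x) := by
          rw [← lintegral_add_measure]
          exact lintegral_mono' (tv_le_add _ _) le_rfl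
        exact ne_top_of_le_ne_top (ENNReal.add_ne_top.2
          ⟨ne_top_of_le_ne_top ENNReal.ofReal_ne_top hb1,
           ne_top_of_le_ne_top ENNReal.ofReal_ne_top hb2⟩) hle
      have hσx : sigmaB β V ((P θ) x) ((P θ') x)
          = (∫⁻ y, ENNReal.ofReal (1 + β * V y) ∂(tv ((P θ) x) ((P θ') x))).toReal :=
        sigma_eq hβ' hVmeas hV0 _ _
      have hlx := hlip θ θ' x
      rw [hσx] at hlx
      calc ∫⁻ y, ENNReal.ofReal (1 + β * V y) ∂(tv ((P θ) x) ((P θ') x))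
          = ENNReal.ofReal
              (∫⁻ y, ENNReal.ofReal (1 + β * V y) ∂(tv ((P θ) x) ((P θ') x))).toReal :=
            (ENNReal.ofReal_toReal hfx).symm
        _ ≤ ENNReal.ofReal (c * (1 + β * V x)) := by
            refine ENNReal.ofReal_le_ofReal ?_
            rw [hc_def]
            linarith
    -- bound on the integral of G
    have hGbound : ∫⁻ x, ENNReal.ofReal (c * (1 + β * V x)) ∂(μst θ)
        ≤ ENNReal.ofReal (c * (1 + β * (K / (1 - γ)))) := by
      have hmom := moment hVmeas hγ0.le hγ1 hK (P θ) (hdrift θ) (μst θ) (hμint θ) (hμinv θ)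
      have h1 : ∀ x, ENNReal.ofReal (c * (1 + β * V x))
          ≤ ENNReal.ofReal c + ENNReal.ofReal (c * β) * ENNReal.ofReal (V x) := by
        intro x
        calc ENNReal.ofReal (c * (1 + β * V x)) = ENNReal.ofReal (c + (c * β) * V x) := by
              congr 1; ring
          _ ≤ ENNReal.ofReal c + ENNReal.ofReal ((c * β) * V x) := ENNReal.ofReal_add_le
          _ = _ := by rw [ENNReal.ofReal_mul (mul_nonneg hc hβ')]
      calc ∫⁻ x, ENNReal.ofReal (c * (1 + β * V x)) ∂(μst θ)
          ≤ ∫⁻ x, (ENNReal.ofReal c + ENNReal.ofReal (c * β) * ENNReal.ofReal (V x))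
              ∂(μst θ) := lintegral_mono h1
        _ = ENNReal.ofReal c
            + ENNReal.ofReal (c * β) * ∫⁻ x, ENNReal.ofReal (V x) ∂(μst θ) := by
            rw [lintegral_add_left measurable_const, lintegral_const,
              lintegral_const_mul _ hVmeas.ennreal_ofReal]
            simp
        _ ≤ ENNReal.ofReal c + ENNReal.ofReal (c * β) * ENNReal.ofReal (K / (1 - γ)) :=
            add_le_add_right (mul_le_mul_right hmom _) _
        _ = ENNReal.ofReal (c * (1 + β * (K / (1 - γ)))) := by
            rw [← ENNReal.ofReal_mul (mul_nonneg hc hβ'),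
              ← ENNReal.ofReal_add hc (mul_nonneg (mul_nonneg hc hβ') hKg)]
            congr 1
            ring
    -- second term: the contraction bound
    have hT2fin : ∫⁻ x, ENNReal.ofReal (1 + β * V x)
        ∂(tv ((μst θ).bind (P θ')) ((μst θ').bind (P θ'))) ≠ ⊤ := by
      have hle : ∫⁻ x, ENNReal.ofReal (1 + β * V x)
            ∂(tv ((μst θ).bind (P θ')) ((μst θ').bind (P θ')))
          ≤ (∫⁻ x, ENNReal.ofReal (1 + β * V x) ∂((μst θ).bind (P θ')))
            + ∫⁻ x, ENNReal.ofReal (1 + β * V x) ∂((μst θ').bind (P θ')) := by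
        rw [← lintegral_add_measure]
        exact lintegral_mono' (tv_le_add _ _) le_rfl
      exact ne_top_of_le_ne_top (ENNReal.add_ne_top.2 ⟨hfin2, hfin3⟩) hle
    have hσ2 : sigmaB β V ((μst θ).bind (P θ')) ((μst θ').bind (P θ'))
        = (∫⁻ x, ENNReal.ofReal (1 + β * V x)
            ∂(tv ((μst θ).bind (P θ')) ((μst θ').bind (P θ')))).toReal :=
      sigma_eq hβ' hVmeas hV0 _ _
    have hcontr := hsig θ' (μst θ) (μst θ') (hμint θ) (hμint θ')
    rw [hσ2, hσL] at hcontr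
    have hT2 : ∫⁻ x, ENNReal.ofReal (1 + β * V x)
          ∂(tv ((μst θ).bind (P θ')) ((μst θ').bind (P θ')))
        ≤ ENNReal.ofReal α * ∫⁻ x, ENNReal.ofReal (1 + β * V x) ∂(tv (μst θ) (μst θ')) := by
      calc ∫⁻ x, ENNReal.ofReal (1 + β * V x)
            ∂(tv ((μst θ).bind (P θ')) ((μst θ').bind (P θ')))
          = ENNReal.ofReal (∫⁻ x, ENNReal.ofReal (1 + β * V x)
              ∂(tv ((μst θ).bind (P θ')) ((μst θ').bind (P θ')))).toReal :=
            (ENNReal.ofReal_toReal hT2fin).symm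
        _ ≤ ENNReal.ofReal (α * (∫⁻ x, ENNReal.ofReal (1 + β * V x)
              ∂(tv (μst θ) (μst θ'))).toReal) := ENNReal.ofReal_le_ofReal hcontr
        _ = ENNReal.ofReal α * ENNReal.ofReal (∫⁻ x, ENNReal.ofReal (1 + β * V x)
              ∂(tv (μst θ) (μst θ'))).toReal := ENNReal.ofReal_mul hα0
        _ = ENNReal.ofReal α * ∫⁻ x, ENNReal.ofReal (1 + β * V x)
              ∂(tv (μst θ) (μst θ')) := by rw [ENNReal.ofReal_toReal hLfin]
    -- combine
    have hL_le : ∫⁻ x, ENNReal.ofReal (1 + β * V x) ∂(tv (μst θ) (μst θ'))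
        ≤ ENNReal.ofReal (c * (1 + β * (K / (1 - γ))))
          + ENNReal.ofReal α * ∫⁻ x, ENNReal.ofReal (1 + β * V x) ∂(tv (μst θ) (μst θ')) :=
      htri.trans (add_le_add (hT1.trans hGbound) hT2)
    have hRfin : ENNReal.ofReal (c * (1 + β * (K / (1 - γ))))
        + ENNReal.ofReal α * ∫⁻ x, ENNReal.ofReal (1 + β * V x) ∂(tv (μst θ) (μst θ')) ≠ ⊤ :=
      ENNReal.add_ne_top.2 ⟨ENNReal.ofReal_ne_top,
        ENNReal.mul_ne_top ENNReal.ofReal_ne_top hLfin⟩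
    have treal := ENNReal.toReal_mono hRfin hL_le
    rw [ENNReal.toReal_add ENNReal.ofReal_ne_top
        (ENNReal.mul_ne_top ENNReal.ofReal_ne_top hLfin),
      ENNReal.toReal_mul, ENNReal.toReal_ofReal hα0,
      ENNReal.toReal_ofReal (mul_nonneg hc
        (by nlinarith [mul_nonneg hβ' hKg]))] at treal
    rw [hσL]
    have hgoal : (∫⁻ x, ENNReal.ofReal (1 + β * V x) ∂(tv (μst θ) (μst θ'))).toReal
        ≤ (c * (1 + β * (K / (1 - γ)))) * (1 / (1 - α)) := by
      rw [mul_one_div, le_div_iff₀ h1α]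
      nlinarith
    refine hgoal.trans (le_of_eq ?_)
    rw [hc_def]
    ring

end PoissonPaper
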